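/- Tightness of the regression bound: there exists a k-action partial label problem D and a regressor f such that reg_η(π_f, D) = sqrt(2k · reg_r(f, P_D)). In particular, the square-root dependence on regression regret is unavoidable for the argmax regression reduction. -/
import Mathlib


open MeasureTheory

/-- tightness of the regression bound: there exists a `k`-action partial
label problem `D` (over `X × [0,1]^k`, with `X = PUnit`) and a regressor `f`, with an
argmax policy `π` for `f`, such that the policy regret of `π` equals
`sqrt(2k · reg_r(f, P_D))` exactly, where `P_D` is the induced regression problem with
uniform action choice and `reg_r` is squared-error regret. -/
theorem regression_reduction_bound_tight :
    ∃ (k : ℕ), 2 ≤ k ∧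
    ∃ (D : Measure (PUnit × (Fin k → ℝ))), IsProbabilityMeasure D ∧
      (∀ᵐ q ∂D, ∀ a, q.2 a ∈ Set.Icc (0:ℝ) 1) ∧
      ∃ (f : PUnit → Fin k → ℝ) (π : PUnit → Fin k),
        (∀ x a, f x a ≤ f x (π x)) ∧
        (let η : (PUnit → Fin k) → ℝ := fun pol => ∫ q, q.2 (pol q.1) ∂D
         let ℓ : (PUnit → Fin k → ℝ) → ℝ :=
          fun f' => ∫ q, (1 / k : ℝ) * ∑ a, (f' q.1 a - q.2 a)^2 ∂D
         let regr : ℝ := ℓ f - ⨅ f' : PUnit → Fin k → ℝ, ℓ f'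
         (⨆ pol : PUnit → Fin k, η pol) - η π = Real.sqrt (2 * k * regr)) := by
  classical
  refine ⟨2, le_refl 2, ?_⟩
  -- rewards: action 0 gets 0, action 1 gets 1
  set q0 : Fin 2 → ℝ := fun a => if a = 1 then 1 else 0 with hq0
  refine ⟨Measure.dirac (PUnit.unit, q0), by infer_instance, ?_, ?_⟩
  · have hmeas : MeasurableSet {x : PUnit × (Fin 2 → ℝ) | ∀ a, x.2 a ∈ Set.Icc (0:ℝ) 1} := by
      have : {x : PUnit × (Fin 2 → ℝ) | ∀ a, x.2 a ∈ Set.Icc (0:ℝ) 1}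
          = ⋂ a : Fin 2, {x : PUnit × (Fin 2 → ℝ) | x.2 a ∈ Set.Icc (0:ℝ) 1} := by
        ext x; simp
      rw [this]
      exact MeasurableSet.iInter fun a =>
        ((measurable_pi_apply a).comp measurable_snd) measurableSet_Icc
    rw [ae_dirac_iff hmeas]
    intro a
    simp only [hq0]
    by_cases h : a = 1 <;> simp [h]
  · refine ⟨fun _ _ => (1/2 : ℝ), fun _ => 0, fun x a => le_refl _, ?_⟩
    intro η ℓ regr
    have hη : ∀ pol : PUnit → Fin 2, η pol = q0 (pol PUnit.unit) := by
      intro pol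
      simp only [η]
      rw [integral_dirac]
    have hℓ : ∀ f' : PUnit → Fin 2 → ℝ,
        ℓ f' = (1/2 : ℝ) * ((f' PUnit.unit 0 - 0)^2 + (f' PUnit.unit 1 - 1)^2) := by
      intro f'
      simp only [ℓ]
      rw [integral_dirac]
      simp [Fin.sum_univ_two, hq0]
    -- infimum of ℓ is 0
    have hbdd : BddBelow (Set.range ℓ) := by
      refine ⟨0, ?_⟩
      rintro _ ⟨f', rfl⟩
      rw [hℓ f']
      positivity
    have hinf : (⨅ f' : PUnit → Fin 2 → ℝ, ℓ f') = 0 := by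
      apply le_antisymm
      · have h1 := ciInf_le hbdd (fun _ => q0)
        have h2 : ℓ (fun _ => q0) = 0 := by rw [hℓ (fun _ => q0)]; simp [hq0]
        calc (⨅ f' : PUnit → Fin 2 → ℝ, ℓ f') ≤ ℓ (fun _ => q0) := h1
          _ = 0 := h2
      · apply le_ciInf
        intro f'
        rw [hℓ f']
        positivity
    -- supremum of η is 1
    have hsup : (⨆ pol : PUnit → Fin 2, η pol) = 1 := by
      apply le_antisymm
      · apply ciSup_le
        intro pol
        rw [hη pol]
        by_cases h : pol PUnit.unit = 1 <;> simp [hq0, h]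
      · have h1 : η (fun _ => 1) = 1 := by rw [hη (fun _ => 1)]; simp [hq0]
        have hb : BddAbove (Set.range η) := by
          refine ⟨1, ?_⟩
          rintro _ ⟨pol, rfl⟩
          rw [hη pol]
          by_cases h : pol PUnit.unit = 1 <;> simp [hq0, h]
        calc (1:ℝ) = η (fun _ => 1) := h1.symm
          _ ≤ ⨆ pol : PUnit → Fin 2, η pol := le_ciSup hb (fun _ => 1)
    have hℓf : ℓ (fun _ _ => (1/2 : ℝ)) = 1/4 := by
      rw [hℓ (fun _ _ => (1/2 : ℝ))]; norm_num
    have hπ : η (fun _ => 0) = 0 := by rw [hη (fun _ => 0)]; simp [hq0]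
    have hregr : regr = 1/4 := by
      simp only [regr]
      rw [hℓf, hinf]
      norm_num
    rw [hsup, hπ, hregr]
    have h4 : (2 * ((2:ℕ):ℝ) * (1/4 : ℝ)) = 1 := by norm_num
    rw [h4, Real.sqrt_one]
    norm_num
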